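/- Let ρ1, ρ2 ∈ (0,1), let m be a positive integer, and let m1, m2 be positive integers with m1 + m2 = m and |m1 − m·log ρ2/(log ρ1 + log ρ2)| ≤ 1/2. Set ρ = exp( (log ρ1 · log ρ2)/(log ρ1 + log ρ2) ). Let Z1 be a monic polynomial of degree m1 with real coefficients, all roots in [√(−b1), √(−a1)], and sup_{u ∈ [√(−b1),√(−a1)]} |Z1(u)/Z1(−u)| ≤ 2·ρ1^{m1}; let Z2 be a monic polynomial of degree m2 with real coefficients, all roots in [√(a2), √(b2)], and sup_{u ∈ [√(a2),√(b2)]} |Z2(u)/Z2(−u)| ≤ 2·ρ2^{m2}. Define H(s) = Z1(−i s)·Z2(s). Then H(−s) ≠ 0 for every s ∈ K̃ and sup_{s ∈ K̃} |H(s)/H(−s)| ≤ 2·max{ρ1^{−1/2}, ρ2^{−1/2}}·ρ^m. -/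

import Mathlib

/-- The segment of the positive imaginary axis `{ i·u : u ∈ [√(−b1), √(−a1)] }`. -/
noncomputable def Kt1 (a1 b1 : ℝ) : Set ℂ :=
  (fun u : ℝ => Complex.I * (u : ℂ)) '' Set.Icc (Real.sqrt (-b1)) (Real.sqrt (-a1))

/-- The segment of the positive real axis `[√(a2), √(b2)]`. -/
noncomputable def Kt2 (a2 b2 : ℝ) : Set ℂ :=
  (fun u : ℝ => (u : ℂ)) '' Set.Icc (Real.sqrt a2) (Real.sqrt b2)

private lemma aeval_real (p : Polynomial ℝ) (x : ℝ) :
    Polynomial.aeval (x : ℂ) p = ((p.eval x : ℝ) : ℂ) := Polynomial.aeval_ofReal p x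

private lemma habs_conj (p : Polynomial ℝ) (u : ℝ) :
    ‖Polynomial.aeval (-(Complex.I*(u:ℂ))) p‖
      = ‖Polynomial.aeval (Complex.I*(u:ℂ)) p‖ := by
  have h : (-(Complex.I*(u:ℂ))) = starRingEnd ℂ (Complex.I*(u:ℂ)) := by
    simp [map_mul, Complex.conj_I]
  rw [h, Polynomial.aeval_conj, Complex.norm_conj]

theorem stmt8 (a1 b1 a2 b2 : ℝ) (hab1 : a1 < b1) (hb1 : b1 < 0) (ha2 : 0 < a2)
    (hab2 : a2 < b2) (ρ1 ρ2 : ℝ) (hρ1 : ρ1 ∈ Set.Ioo (0 : ℝ) 1) (hρ2 : ρ2 ∈ Set.Ioo (0 : ℝ) 1)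
    (m : ℕ) (hm : 0 < m) (m1 m2 : ℕ) (hm1 : 0 < m1) (hm2 : 0 < m2) (hm12 : m1 + m2 = m)
    (hbal : |(m1 : ℝ) - m * Real.log ρ2 / (Real.log ρ1 + Real.log ρ2)| ≤ 1 / 2)
    (ρ : ℝ) (hρ : ρ = Real.exp (Real.log ρ1 * Real.log ρ2 / (Real.log ρ1 + Real.log ρ2)))
    (Z1 Z2 : Polynomial ℝ)
    (hZ1monic : Z1.Monic) (hZ1deg : Z1.natDegree = m1)
    (hZ1roots : ∀ z : ℂ, Polynomial.aeval z Z1 = 0 →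
      ∃ x ∈ Set.Icc (Real.sqrt (-b1)) (Real.sqrt (-a1)), z = (x : ℂ))
    (hZ1sup : sSup ((fun u : ℝ => |Z1.eval u / Z1.eval (-u)|) ''
      Set.Icc (Real.sqrt (-b1)) (Real.sqrt (-a1))) ≤ 2 * ρ1 ^ m1)
    (hZ2monic : Z2.Monic) (hZ2deg : Z2.natDegree = m2)
    (hZ2roots : ∀ z : ℂ, Polynomial.aeval z Z2 = 0 →
      ∃ x ∈ Set.Icc (Real.sqrt a2) (Real.sqrt b2), z = (x : ℂ))
    (hZ2sup : sSup ((fun u : ℝ => |Z2.eval u / Z2.eval (-u)|) ''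
      Set.Icc (Real.sqrt a2) (Real.sqrt b2)) ≤ 2 * ρ2 ^ m2)
    (H : ℂ → ℂ)
    (hH : ∀ s : ℂ, H s = (Z1.map (algebraMap ℝ ℂ)).eval (-(Complex.I * s)) *
      (Z2.map (algebraMap ℝ ℂ)).eval s) :
    (∀ s ∈ Kt1 a1 b1 ∪ Kt2 a2 b2, H (-s) ≠ 0) ∧
    sSup ((fun s : ℂ => ‖H s / H (-s)‖) '' (Kt1 a1 b1 ∪ Kt2 a2 b2)) ≤
      2 * max (ρ1 ^ (-(1 / 2) : ℝ)) (ρ2 ^ (-(1 / 2) : ℝ)) * ρ ^ m := by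
  obtain ⟨hρ1pos, hρ1lt⟩ := hρ1
  obtain ⟨hρ2pos, hρ2lt⟩ := hρ2
  have hL1neg : Real.log ρ1 < 0 := Real.log_neg hρ1pos hρ1lt
  have hL2neg : Real.log ρ2 < 0 := Real.log_neg hρ2pos hρ2lt
  have hDneg : Real.log ρ1 + Real.log ρ2 < 0 := by linarith
  have hDne : Real.log ρ1 + Real.log ρ2 ≠ 0 := ne_of_lt hDneg
  have hρpos : 0 < ρ := hρ ▸ Real.exp_pos _
  simp only [Polynomial.eval_map, ← Polynomial.aeval_def] at hH
  have hs1pos : 0 < Real.sqrt (-b1) := Real.sqrt_pos.mpr (by linarith)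
  have hs2pos : 0 < Real.sqrt a2 := Real.sqrt_pos.mpr ha2
  set B := 2 * max (ρ1 ^ (-(1 / 2) : ℝ)) (ρ2 ^ (-(1 / 2) : ℝ)) * ρ ^ m with hB
  -- denominators are nonzero
  have hden1 : ∀ u ∈ Set.Icc (Real.sqrt (-b1)) (Real.sqrt (-a1)), Z1.eval (-u) ≠ 0 := by
    intro u hu h0
    have h0' : Polynomial.aeval ((-u : ℝ) : ℂ) Z1 = 0 := by
      rw [aeval_real, h0]; simp
    obtain ⟨x, hx, hxe⟩ := hZ1roots _ h0'
    have hux : (-u : ℝ) = x := by exact_mod_cast hxe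
    have hu0 : 0 < u := lt_of_lt_of_le hs1pos hu.1
    linarith [hx.1]
  have hden2 : ∀ u ∈ Set.Icc (Real.sqrt a2) (Real.sqrt b2), Z2.eval (-u) ≠ 0 := by
    intro u hu h0
    have h0' : Polynomial.aeval ((-u : ℝ) : ℂ) Z2 = 0 := by
      rw [aeval_real, h0]; simp
    obtain ⟨x, hx, hxe⟩ := hZ2roots _ h0'
    have hux : (-u : ℝ) = x := by exact_mod_cast hxe
    have hu0 : 0 < u := lt_of_lt_of_le hs2pos hu.1
    linarith [hx.1]
  have hoff2 : ∀ u : ℝ, 0 < u → Polynomial.aeval (-(Complex.I*(u:ℂ))) Z2 ≠ 0 := by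
    intro u hu h0
    obtain ⟨x, hx, hxe⟩ := hZ2roots _ h0
    have him := congrArg Complex.im hxe
    simp [Complex.mul_im] at him
    linarith
  have hoff1 : ∀ u : ℝ, 0 < u → Polynomial.aeval (Complex.I*(u:ℂ)) Z1 ≠ 0 := by
    intro u hu h0
    obtain ⟨x, hx, hxe⟩ := hZ1roots _ h0
    have him := congrArg Complex.im hxe
    simp [Complex.mul_im] at him
    linarith
  -- bounds from the sup hypotheses
  have hbdd1 : BddAbove ((fun u : ℝ => |Z1.eval u / Z1.eval (-u)|) ''
      Set.Icc (Real.sqrt (-b1)) (Real.sqrt (-a1))) := by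
    refine IsCompact.bddAbove (IsCompact.image_of_continuousOn isCompact_Icc ?_)
    refine ContinuousOn.abs (ContinuousOn.div Z1.continuous.continuousOn
      ((Z1.continuous.comp continuous_neg).continuousOn) hden1)
  have hbdd2 : BddAbove ((fun u : ℝ => |Z2.eval u / Z2.eval (-u)|) ''
      Set.Icc (Real.sqrt a2) (Real.sqrt b2)) := by
    refine IsCompact.bddAbove (IsCompact.image_of_continuousOn isCompact_Icc ?_)
    refine ContinuousOn.abs (ContinuousOn.div Z2.continuous.continuousOn
      ((Z2.continuous.comp continuous_neg).continuousOn) hden2)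
  have hb1 : ∀ u ∈ Set.Icc (Real.sqrt (-b1)) (Real.sqrt (-a1)),
      |Z1.eval u / Z1.eval (-u)| ≤ 2 * ρ1 ^ m1 :=
    fun u hu => le_trans (le_csSup hbdd1 ⟨u, hu, rfl⟩) hZ1sup
  have hb2 : ∀ u ∈ Set.Icc (Real.sqrt a2) (Real.sqrt b2),
      |Z2.eval u / Z2.eval (-u)| ≤ 2 * ρ2 ^ m2 :=
    fun u hu => le_trans (le_csSup hbdd2 ⟨u, hu, rfl⟩) hZ2sup
  -- arithmetic: 2 ρ1^m1 ≤ B and 2 ρ2^m2 ≤ B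
  have hρm : ρ ^ m = Real.exp ((m : ℝ) *
      (Real.log ρ1 * Real.log ρ2 / (Real.log ρ1 + Real.log ρ2))) := by
    rw [hρ, Real.exp_nat_mul]
  have hbal' := abs_le.mp hbal
  have hm2cast : (m2:ℝ) = (m:ℝ) - (m1:ℝ) := by
    have : ((m1 + m2 : ℕ) : ℝ) = (m : ℝ) := by exact_mod_cast congrArg (Nat.cast : ℕ → ℝ) hm12
    push_cast at this; linarith
  have key1 : ρ1 ^ m1 ≤ ρ1 ^ (-(1/2):ℝ) * ρ ^ m := by
    rw [show ρ1 ^ m1 = Real.exp ((m1:ℝ) * Real.log ρ1) from by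
        rw [Real.exp_nat_mul, Real.exp_log hρ1pos],
      Real.rpow_def_of_pos hρ1pos, hρm, ← Real.exp_add, Real.exp_le_exp]
    have h1 : (m:ℝ) * Real.log ρ2 / (Real.log ρ1 + Real.log ρ2) - 1/2 ≤ (m1:ℝ) := by
      linarith [hbal'.1]
    have h2 := mul_le_mul_of_nonpos_right h1 hL1neg.le
    calc (m1:ℝ) * Real.log ρ1
        ≤ ((m:ℝ) * Real.log ρ2 / (Real.log ρ1 + Real.log ρ2) - 1/2) * Real.log ρ1 := h2
      _ = Real.log ρ1 * (-(1/2):ℝ) + (m:ℝ) *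
          (Real.log ρ1 * Real.log ρ2 / (Real.log ρ1 + Real.log ρ2)) := by ring
  have key2 : ρ2 ^ m2 ≤ ρ2 ^ (-(1/2):ℝ) * ρ ^ m := by
    rw [show ρ2 ^ m2 = Real.exp ((m2:ℝ) * Real.log ρ2) from by
        rw [Real.exp_nat_mul, Real.exp_log hρ2pos],
      Real.rpow_def_of_pos hρ2pos, hρm, ← Real.exp_add, Real.exp_le_exp]
    have hsplit : (m:ℝ) - (m:ℝ) * Real.log ρ2 / (Real.log ρ1 + Real.log ρ2)
        = (m:ℝ) * Real.log ρ1 / (Real.log ρ1 + Real.log ρ2) := by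
      field_simp; ring
    have h1 : (m:ℝ) * Real.log ρ1 / (Real.log ρ1 + Real.log ρ2) - 1/2 ≤ (m2:ℝ) := by
      rw [hm2cast]; linarith [hbal'.2]
    have h2 := mul_le_mul_of_nonpos_right h1 hL2neg.le
    calc (m2:ℝ) * Real.log ρ2
        ≤ ((m:ℝ) * Real.log ρ1 / (Real.log ρ1 + Real.log ρ2) - 1/2) * Real.log ρ2 := h2
      _ = Real.log ρ2 * (-(1/2):ℝ) + (m:ℝ) *
          (Real.log ρ1 * Real.log ρ2 / (Real.log ρ1 + Real.log ρ2)) := by ring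
  have hρmpos : (0:ℝ) < ρ ^ m := pow_pos hρpos m
  have hBge1 : 2 * ρ1 ^ m1 ≤ B := by
    have hmax : ρ1 ^ (-(1/2):ℝ) ≤ max (ρ1 ^ (-(1 / 2) : ℝ)) (ρ2 ^ (-(1 / 2) : ℝ)) :=
      le_max_left _ _
    have : ρ1 ^ (-(1/2):ℝ) * ρ ^ m ≤
        max (ρ1 ^ (-(1 / 2) : ℝ)) (ρ2 ^ (-(1 / 2) : ℝ)) * ρ ^ m :=
      mul_le_mul_of_nonneg_right hmax hρmpos.le
    rw [hB]
    calc 2 * ρ1 ^ m1 ≤ 2 * (ρ1 ^ (-(1/2):ℝ) * ρ ^ m) := by linarith [key1]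
      _ ≤ 2 * (max (ρ1 ^ (-(1 / 2) : ℝ)) (ρ2 ^ (-(1 / 2) : ℝ)) * ρ ^ m) := by linarith [this]
      _ = 2 * max (ρ1 ^ (-(1 / 2) : ℝ)) (ρ2 ^ (-(1 / 2) : ℝ)) * ρ ^ m := by ring
  have hBge2 : 2 * ρ2 ^ m2 ≤ B := by
    have hmax : ρ2 ^ (-(1/2):ℝ) ≤ max (ρ1 ^ (-(1 / 2) : ℝ)) (ρ2 ^ (-(1 / 2) : ℝ)) :=
      le_max_right _ _
    have : ρ2 ^ (-(1/2):ℝ) * ρ ^ m ≤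
        max (ρ1 ^ (-(1 / 2) : ℝ)) (ρ2 ^ (-(1 / 2) : ℝ)) * ρ ^ m :=
      mul_le_mul_of_nonneg_right hmax hρmpos.le
    rw [hB]
    calc 2 * ρ2 ^ m2 ≤ 2 * (ρ2 ^ (-(1/2):ℝ) * ρ ^ m) := by linarith [key2]
      _ ≤ 2 * (max (ρ1 ^ (-(1 / 2) : ℝ)) (ρ2 ^ (-(1 / 2) : ℝ)) * ρ ^ m) := by linarith [this]
      _ = 2 * max (ρ1 ^ (-(1 / 2) : ℝ)) (ρ2 ^ (-(1 / 2) : ℝ)) * ρ ^ m := by ring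
  have hB0 : (0:ℝ) ≤ B := le_trans (by positivity) hBge1
  have hII : Complex.I * Complex.I = -1 := Complex.I_mul_I
  -- the pointwise claim
  have main : ∀ s ∈ Kt1 a1 b1 ∪ Kt2 a2 b2,
      H (-s) ≠ 0 ∧ ‖H s / H (-s)‖ ≤ B := by
    rintro s (⟨u, hu, rfl⟩ | ⟨u, hu, rfl⟩)
    · have hu0 : 0 < u := lt_of_lt_of_le hs1pos hu.1
      have e1 : -(Complex.I * -(Complex.I * (u:ℂ))) = ((-u : ℝ) : ℂ) := by
        push_cast; linear_combination (u:ℂ) * hII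
      have e2 : -(Complex.I * (Complex.I * (u:ℂ))) = ((u : ℝ) : ℂ) := by
        push_cast; linear_combination (-(u:ℂ)) * hII
      have hHs : H (Complex.I*(u:ℂ)) =
          ((Z1.eval u : ℝ) : ℂ) * Polynomial.aeval (Complex.I*(u:ℂ)) Z2 := by
        rw [hH, e2, aeval_real]
      have hHns : H (-(Complex.I*(u:ℂ))) =
          ((Z1.eval (-u) : ℝ) : ℂ) * Polynomial.aeval (-(Complex.I*(u:ℂ))) Z2 := by
        rw [hH, e1, aeval_real]
      have hd1 : ((Z1.eval (-u) : ℝ) : ℂ) ≠ 0 := Complex.ofReal_ne_zero.mpr (hden1 u hu)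
      have hd2 := hoff2 u hu0
      refine ⟨by rw [hHns]; exact mul_ne_zero hd1 hd2, ?_⟩
      rw [hHs, hHns, norm_div, norm_mul, norm_mul, habs_conj Z2 u]
      have hc : ‖Polynomial.aeval (Complex.I*(u:ℂ)) Z2‖ ≠ 0 := by
        rw [← habs_conj Z2 u]; exact norm_ne_zero_iff.mpr hd2
      rw [mul_div_mul_right _ _ hc, Complex.norm_real, Complex.norm_real, Real.norm_eq_abs, Real.norm_eq_abs, ← abs_div]
      exact le_trans (hb1 u hu) hBge1
    · have hu0 : 0 < u := lt_of_lt_of_le hs2pos hu.1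
      have e1 : -(Complex.I * -(u:ℂ)) = Complex.I * (u:ℂ) := by ring
      have e2 : (-(u:ℂ)) = ((-u : ℝ) : ℂ) := by push_cast; ring
      have hHs : H ((u:ℂ)) =
          Polynomial.aeval (-(Complex.I*(u:ℂ))) Z1 * ((Z2.eval u : ℝ) : ℂ) := by
        rw [hH, aeval_real]
      have hHns : H (-(u:ℂ)) =
          Polynomial.aeval (Complex.I*(u:ℂ)) Z1 * ((Z2.eval (-u) : ℝ) : ℂ) := by
        rw [hH, e1, e2, aeval_real]
      have hd1 := hoff1 u hu0
      have hd2 : ((Z2.eval (-u) : ℝ) : ℂ) ≠ 0 := Complex.ofReal_ne_zero.mpr (hden2 u hu)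
      refine ⟨by rw [hHns]; exact mul_ne_zero hd1 hd2, ?_⟩
      rw [hHs, hHns, norm_div, norm_mul, norm_mul, habs_conj Z1 u]
      have hc : ‖Polynomial.aeval (Complex.I*(u:ℂ)) Z1‖ ≠ 0 :=
        norm_ne_zero_iff.mpr hd1
      rw [mul_div_mul_left _ _ hc, Complex.norm_real, Complex.norm_real, Real.norm_eq_abs, Real.norm_eq_abs, ← abs_div]
      exact le_trans (hb2 u hu) hBge2
  refine ⟨fun s hs => (main s hs).1, ?_⟩
  refine Real.sSup_le ?_ hB0
  rintro x ⟨s, hs, rfl⟩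
  exact (main s hs).2
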